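/- Let R be a commutative ring and A an associative unital R-algebra that is finite and free as an R-module. Let P be a left A-module admitting a finite A-basis c₁, …, cₘ (so that P is also finite and free as an R-module). Then for every A-linear endomorphism f of P, the trace of f regarded as an R-linear endomorphism of P equals the trace of the R-linear endomorphism of A given by right multiplication by the element ∑ᵢ cᵢ*(f(cᵢ)) ∈ A, where cᵢ* : P → A denotes the i-th coordinate function of the basis (cᵢ). -/

import Mathlib

/-- **Hattori–Stallings trace compatibility (free case).**
Let `R` be a commutative ring, `A` an `R`-algebra that is finite free as an `R`-module,
and `P` a left `A`-module with a finite `A`-basis `c`.  For every `A`-linear endomorphism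
`f` of `P`, the trace of `f` as an `R`-linear endomorphism of `P` equals the trace of the
`R`-linear endomorphism of `A` given by right multiplication by `∑ i, cᵢ*(f (cᵢ))`. -/
theorem stmt0 {R A P ι : Type*} [CommRing R] [Ring A] [Algebra R A]
    [AddCommGroup P] [Module A P] [Module R P] [IsScalarTower R A P]
    [Module.Finite R A] [Module.Free R A]
    [Fintype ι] (c : Module.Basis ι A P) (f : P →ₗ[A] P) :
    LinearMap.trace R P (f.restrictScalars R) =
      LinearMap.trace R A (LinearMap.mulRight R (∑ i, c.repr (f (c i)) i)) := by
  classical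
  let b := Module.Free.chooseBasis R A
  let bc := b.smulTower c
  rw [LinearMap.trace_eq_matrix_trace R bc, LinearMap.trace_eq_matrix_trace R b,
    Matrix.trace, Matrix.trace]
  simp only [Matrix.diag, LinearMap.toMatrix_apply, LinearMap.restrictScalars_apply,
    LinearMap.mulRight_apply]
  rw [Fintype.sum_prod_type]
  simp only [bc, Module.Basis.smulTower_repr, Module.Basis.smulTower_apply, map_smul, Finset.mul_sum,
    Finset.sum_mul, map_sum, Finsupp.finset_sum_apply, Finsupp.smul_apply, smul_eq_mul,
    Algebra.smul_def]
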